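/- Let n ≥ 1, R, r, c > 0 with c > (R + r)^n. Then the Lebesgue measure of {x ∈ ℝⁿ : x₁,…,xₙ > R, ∏ₖ (xₖ + r) < c} equals ∑_{k=1}^n B_{n,k} c (log c)^{n-k} + (-1)^n (R + r)^n, where B_{n,1} = 1/(n-1)! and B_{n,k} for k ≥ 2 are real constants depending only on n, k, and R + r. -/

import Mathlib

open MeasureTheory Polynomial Set

noncomputable def intP (P : Polynomial ℝ) : Polynomial ℝ :=
  ∑ j ∈ P.support, C (P.coeff j / (j + 1)) * X ^ (j + 1)

lemma derivative_intP (P : Polynomial ℝ) : derivative (intP P) = P := by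
  rw [intP, map_sum]
  conv_rhs => rw [P.as_sum_support_C_mul_X_pow]
  refine Finset.sum_congr rfl fun j hj => ?_
  rw [derivative_C_mul_X_pow]
  have : ((j : ℝ) + 1) ≠ 0 := by positivity
  push_cast
  field_simp

lemma natDegree_intP_le (P : Polynomial ℝ) : (intP P).natDegree ≤ P.natDegree + 1 := by
  refine Polynomial.natDegree_sum_le_of_forall_le _ _ fun j hj => ?_
  refine (natDegree_C_mul_le _ _).trans ?_
  simpa using Nat.succ_le_succ (Polynomial.le_natDegree_of_mem_supp j hj)

lemma coeff_intP (P : Polynomial ℝ) (j : ℕ) :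
    (intP P).coeff (j + 1) = P.coeff j / (j + 1) := by
  rw [intP, finset_sum_coeff]
  by_cases hj : j ∈ P.support
  · rw [Finset.sum_eq_single j]
    · simp
    · intro b _ hb
      simp [coeff_C_mul, coeff_X_pow, Ne.symm hb]
    · simp [hj]
  · rw [Finset.sum_eq_zero, eq_comm]
    · simp [Polynomial.notMem_support_iff.1 hj]
    · intro b hb
      have hbj : b ≠ j := fun h => hj (h ▸ hb)
      simp [coeff_C_mul, coeff_X_pow, Ne.symm hbj]

lemma hasseDeriv_high (p : Polynomial ℝ) (n : ℕ) (h : p.natDegree ≤ n) :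
    Polynomial.hasseDeriv n p = C (p.coeff n) := by
  ext m
  rw [Polynomial.hasseDeriv_coeff, coeff_C]
  rcases Nat.eq_zero_or_pos m with hm | hm
  · subst hm; simp
  · have : p.natDegree < m + n := by omega
    rw [Polynomial.coeff_eq_zero_of_natDegree_lt this]
    simp [Nat.pos_iff_ne_zero.1 hm]
    
lemma coeff_comp_linear (p : Polynomial ℝ) (b : ℝ) (n : ℕ) (h : p.natDegree ≤ n) :
    (p.comp (X - C b)).coeff n = p.coeff n := by
  have : p.comp (X - C b) = Polynomial.taylor (-b) p := by
    rw [Polynomial.taylor_apply]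
    congr 1
    rw [map_neg, sub_eq_add_neg]
  rw [this, Polynomial.taylor_coeff, hasseDeriv_high p n h]
  simp

def Sset (a : ℝ) (n : ℕ) (c : ℝ) : Set (Fin n → ℝ) :=
  {y | (∀ k, a < y k) ∧ (∏ k, y k) < c}

lemma measurableSet_Sset (a : ℝ) (n : ℕ) (c : ℝ) : MeasurableSet (Sset a n c) := by
  have h1 : MeasurableSet {y : Fin n → ℝ | ∀ k, a < y k} := by
    rw [Set.setOf_forall]
    exact MeasurableSet.iInter fun k => measurableSet_lt measurable_const (measurable_pi_apply k)
  have h2 : MeasurableSet {y : Fin n → ℝ | (∏ k, y k) < c} :=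
    measurableSet_lt (Finset.measurable_prod _ fun k _ => measurable_pi_apply k) measurable_const
  exact h1.inter h2

lemma Sset_empty (a : ℝ) (n : ℕ) (c : ℝ) (ha : 0 < a) (hn : 1 ≤ n) (hc : c ≤ a ^ n) :
    Sset a n c = ∅ := by
  ext y
  simp only [Sset, Set.mem_setOf_eq, Set.mem_empty_iff_false, iff_false, not_and]
  intro hy hlt
  have : a ^ n < ∏ k, y k := by
    have := Finset.prod_lt_prod_of_nonempty (s := Finset.univ) (f := fun _ : Fin n => a)
      (g := y) (fun _ _ => ha) (fun k _ => hy k)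
      (by haveI : Nonempty (Fin n) := Fin.pos_iff_nonempty.mp (by omega)
          exact Finset.univ_nonempty)
    simpa using this
  linarith

lemma slice_eq (a : ℝ) (ha : 0 < a) (m : ℕ) (c : ℝ) :
    volume (Sset a (m + 1) c) = ∫⁻ t in Set.Ioi a, volume (Sset a m (c / t)) := by
  have hmp := volume_preserving_piFinSuccAbove (fun _ : Fin (m + 1) => ℝ) 0
  set e := MeasurableEquiv.piFinSuccAbove (fun _ : Fin (m + 1) => ℝ) 0 with he
  have hS : MeasurableSet (e.symm ⁻¹' Sset a (m + 1) c) :=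
    e.symm.measurable (measurableSet_Sset _ _ _)
  have h1 : volume (Sset a (m + 1) c) = volume (e.symm ⁻¹' Sset a (m + 1) c) :=
    ((hmp.symm e).measure_preimage (measurableSet_Sset _ _ _).nullMeasurableSet).symm
  rw [h1, Measure.volume_eq_prod, Measure.prod_apply hS]
  have hslice : ∀ t : ℝ, Prod.mk t ⁻¹' (e.symm ⁻¹' Sset a (m + 1) c) =
      if a < t then Sset a m (c / t) else (∅ : Set (Fin m → ℝ)) := by
    intro t
    ext y
    have hz : ∀ j, e.symm (t, y) ((0 : Fin (m+1)).succAbove j) = y j := by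
      intro j
      simp [he, MeasurableEquiv.piFinSuccAbove]
    have hz0 : e.symm (t, y) 0 = t := by
      simp [he, MeasurableEquiv.piFinSuccAbove]
    simp only [Set.mem_preimage, Sset, Set.mem_setOf_eq]
    rw [Fin.forall_iff_succAbove (0 : Fin (m+1)), Fin.prod_univ_succAbove _ (0 : Fin (m+1))]
    simp only [hz, hz0]
    by_cases hat : a < t
    · rw [if_pos hat]
      simp only [Sset, Set.mem_setOf_eq, hat, true_and]
      have ht0 : 0 < t := lt_trans ha hat
      rw [mul_comm, ← lt_div_iff₀ ht0]
    · rw [if_neg hat]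
      simp only [Set.mem_empty_iff_false, iff_false]
      rintro ⟨⟨h, -⟩, -⟩
      exact hat h
  calc ∫⁻ t, volume (Prod.mk t ⁻¹' (e.symm ⁻¹' Sset a (m + 1) c))
      = ∫⁻ t, (Set.Ioi a).indicator (fun t => volume (Sset a m (c / t))) t := by
        congr 1; ext t
        rw [hslice t]
        by_cases hat : a < t
        · rw [if_pos hat, Set.indicator_of_mem (Set.mem_Ioi.2 hat)]
        · rw [if_neg hat, Set.indicator_of_notMem (by simpa using hat), measure_empty]
    _ = ∫⁻ t in Set.Ioi a, volume (Sset a m (c / t)) := lintegral_indicator measurableSet_Ioi _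

lemma main_ind (a : ℝ) (ha : 0 < a) : ∀ n : ℕ, 1 ≤ n → ∃ P : Polynomial ℝ,
    P.natDegree ≤ n - 1 ∧ P.coeff (n - 1) = 1 / (Nat.factorial (n - 1) : ℝ) ∧
    ∀ c : ℝ, a ^ n < c →
      0 ≤ c * P.eval (Real.log c) + (-1 : ℝ) ^ n * a ^ n ∧
      volume (Sset a n c) = ENNReal.ofReal (c * P.eval (Real.log c) + (-1 : ℝ) ^ n * a ^ n) := by
  intro n hn
  induction n, hn using Nat.le_induction with
  | base =>
    refine ⟨1, by simp, by simp, fun c hc => ?_⟩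
    rw [pow_one] at hc
    have hS : Sset a 1 c = (fun y : Fin 1 → ℝ => y 0) ⁻¹' Set.Ioo a c := by
      ext y
      simp [Sset, Fin.forall_fin_one, Fin.prod_univ_one, Set.mem_Ioo]
    constructor
    · simp only [eval_one, mul_one, pow_one]
      linarith
    · rw [hS]
      have := (volume_preserving_funUnique (Fin 1) ℝ).measure_preimage
        (measurableSet_Ioo (a := a) (b := c)).nullMeasurableSet
      simp only [MeasurableEquiv.funUnique_apply] at this
      rw [show volume ((fun y : Fin 1 → ℝ => y 0) ⁻¹' Set.Ioo a c) = volume (Set.Ioo a c) from this,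
        Real.volume_Ioo]
      congr 1
      simp
      ring
  | succ n hn IH =>
    obtain ⟨P, hdeg, hcoeff, hP⟩ := IH
    set la := Real.log a with hla
    set IP := intP P with hIP
    set P' : Polynomial ℝ := IP.comp (X - C la) + C ((-1 : ℝ) ^ n - IP.eval (n * la)) with hP'
    have hIPdeg : IP.natDegree ≤ n := (natDegree_intP_le P).trans (by omega)
    refine ⟨P', ?_, ?_, ?_⟩
    · -- degree bound
      simp only [Nat.add_sub_cancel]
      refine (natDegree_add_le _ _).trans ?_
      simp only [natDegree_C, max_eq_left (Nat.zero_le _)]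
      exact (natDegree_comp_le).trans (by simpa [natDegree_X_sub_C] using hIPdeg)
    · -- top coefficient
      rw [hP']
      simp only [Nat.add_sub_cancel, coeff_add, coeff_C, if_neg (by omega : ¬ n = 0), add_zero]
      rw [coeff_comp_linear IP la n hIPdeg]
      have hn1 : n - 1 + 1 = n := by omega
      have := coeff_intP P (n - 1)
      rw [hn1] at this
      rw [this, hcoeff]
      rw [show Nat.factorial n = n * Nat.factorial (n - 1) by
        conv_lhs => rw [← hn1, Nat.factorial_succ, hn1]]
      have h1 : (Nat.factorial (n - 1) : ℝ) ≠ 0 := Nat.cast_ne_zero.2 (Nat.factorial_ne_zero _)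
      have h2 : (n : ℝ) ≠ 0 := Nat.cast_ne_zero.2 (by omega)
      push_cast
      rw [← hn1]
      push_cast
      field_simp
    · intro c hc
      have hc0 : 0 < c := lt_trans (by positivity) hc
      have han : (0:ℝ) < a ^ n := by positivity
      set X₀ : ℝ := c / a ^ n with hX₀
      have haX : a < X₀ := by
        rw [hX₀, lt_div_iff₀ han]
        calc a * a ^ n = a ^ (n + 1) := by ring
          _ < c := hc
      set f : ℝ → ℝ := fun u => u * P.eval (Real.log u) + (-1 : ℝ) ^ n * a ^ n with hf
      have hcont : ContinuousOn (fun t => f (c / t)) (Set.Icc a X₀) := by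
        intro t ht
        have ht0 : t ≠ 0 := (lt_of_lt_of_le ha ht.1).ne'
        have h1 : ContinuousAt (fun t : ℝ => c / t) t :=
          continuousAt_const.div continuousAt_id ht0
        have h2 : ContinuousAt (fun t : ℝ => Real.log (c / t)) t :=
          (Real.continuousAt_log (div_ne_zero hc0.ne' ht0)).comp h1
        exact ((h1.mul ((P.continuousAt).comp h2)).add continuousAt_const).continuousWithinAt
      have hnonneg : ∀ t ∈ Set.Ioo a X₀, 0 ≤ f (c / t) := by
        intro t ht
        have ht0 : 0 < t := lt_trans ha ht.1
        have han' : a ^ n < c / t := by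
          rw [lt_div_iff₀ ht0, mul_comm]
          exact (lt_div_iff₀ han).1 ht.2
        exact (hP (c / t) han').1
      have key1 : volume (Sset a (n + 1) c) =
          ∫⁻ t in Set.Ioo a X₀, ENNReal.ofReal (f (c / t)) := by
        rw [slice_eq a ha n c]
        have heq : ∀ t ∈ Set.Ioi a, volume (Sset a n (c / t)) =
            (Set.Ioo a X₀).indicator (fun t => ENNReal.ofReal (f (c / t))) t := by
          intro t ht
          have ht0 : 0 < t := lt_trans ha ht
          by_cases htX : t < X₀
          · rw [Set.indicator_of_mem (Set.mem_Ioo.2 ⟨Set.mem_Ioi.1 ht, htX⟩)]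
            have han' : a ^ n < c / t := by
              rw [lt_div_iff₀ ht0, mul_comm]
              exact (lt_div_iff₀ han).1 htX
            exact (hP (c / t) han').2
          · rw [Set.indicator_of_notMem (fun hmem => htX hmem.2)]
            have hle : c / t ≤ a ^ n := by
              rw [div_le_iff₀ ht0, mul_comm]
              have hXt : X₀ ≤ t := not_lt.1 htX
              have := mul_le_mul_of_nonneg_right hXt han.le
              rw [hX₀, div_mul_cancel₀ _ han.ne'] at this
              linarith
            rw [Sset_empty a n (c / t) ha hn hle, measure_empty]
        rw [setLIntegral_congr_fun measurableSet_Ioi heq,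
          lintegral_indicator measurableSet_Ioo, Measure.restrict_restrict measurableSet_Ioo,
          Set.inter_eq_left.2 Set.Ioo_subset_Ioi_self]
      have hInt : Integrable (fun t => f (c / t)) (volume.restrict (Set.Ioo a X₀)) :=
        (hcont.integrableOn_Icc).mono_set Set.Ioo_subset_Icc_self
      have key2 : ∫⁻ t in Set.Ioo a X₀, ENNReal.ofReal (f (c / t)) =
          ENNReal.ofReal (∫ t in Set.Ioo a X₀, f (c / t)) :=
        (MeasureTheory.ofReal_integral_eq_lintegral_ofReal hInt
          ((ae_restrict_iff' measurableSet_Ioo).2 (ae_of_all _ hnonneg))).symm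
      set G : ℝ → ℝ := fun t => -(c * IP.eval (Real.log c - Real.log t)) + (-1 : ℝ) ^ n * a ^ n * t
        with hG
      have hderiv : ∀ t ∈ Set.uIcc a X₀, HasDerivAt G (f (c / t)) t := by
        intro t ht
        rw [Set.uIcc_of_le haX.le] at ht
        have ht0 : 0 < t := lt_of_lt_of_le ha ht.1
        have h1 : HasDerivAt (fun t => Real.log c - Real.log t) (-t⁻¹) t :=
          HasDerivAt.const_sub (Real.log c) (Real.hasDerivAt_log ht0.ne')
        have h2 : HasDerivAt (fun t => IP.eval (Real.log c - Real.log t))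
            (P.eval (Real.log c - Real.log t) * -t⁻¹) t := by
          have h := (IP.hasDerivAt (Real.log c - Real.log t)).comp t h1
          rw [hIP, derivative_intP] at h
          exact h
        have h3 := (h2.const_mul c).neg.add ((hasDerivAt_id' t).const_mul ((-1 : ℝ) ^ n * a ^ n))
        convert h3 using 1
        show f (c / t) = _
        rw [hf]
        simp only []
        rw [Real.log_div hc0.ne' ht0.ne']
        field_simp
        all_goals rfl
      have hII : IntervalIntegrable (fun t => f (c / t)) volume a X₀ :=
        (by rwa [Set.uIcc_of_le haX.le] : ContinuousOn (fun t => f (c / t))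
          (Set.uIcc a X₀)).intervalIntegrable
      have hFTC : ∫ t in a..X₀, f (c / t) = G X₀ - G a :=
        intervalIntegral.integral_eq_sub_of_hasDerivAt hderiv hII
      have hlogX : Real.log X₀ = Real.log c - n * la := by
        rw [hX₀, Real.log_div hc0.ne' (by positivity), Real.log_pow, hla]
      have hGval : G X₀ - G a = c * P'.eval (Real.log c) + (-1 : ℝ) ^ (n + 1) * a ^ (n + 1) := by
        rw [hG, hP']
        simp only [eval_add, eval_comp, eval_sub, eval_X, eval_C]
        rw [hlogX]
        have e1 : Real.log c - (Real.log c - n * la) = n * la := by ring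
        rw [e1]
        have e2 : (-1 : ℝ) ^ n * a ^ n * X₀ = (-1 : ℝ) ^ n * c := by
          rw [hX₀, mul_assoc]
          field_simp
        rw [e2]
        ring
      have hval : ∫ t in Set.Ioo a X₀, f (c / t) =
          c * P'.eval (Real.log c) + (-1 : ℝ) ^ (n + 1) * a ^ (n + 1) := by
        rw [← MeasureTheory.integral_Ioc_eq_integral_Ioo,
          ← intervalIntegral.integral_of_le haX.le, hFTC, hGval]
      refine ⟨?_, ?_⟩
      · rw [← hval]
        exact setIntegral_nonneg measurableSet_Ioo hnonneg
      · rw [key1, key2, hval]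

lemma sum_swap_lemma (P : Polynomial ℝ) (n : ℕ) (hn : 1 ≤ n) (hd : P.natDegree < n) (c x : ℝ) :
    ∑ k ∈ Finset.Icc 1 n, P.coeff (n - k) * c * x ^ (n - k) = c * P.eval x := by
  rw [Polynomial.eval_eq_sum_range' hd, Finset.mul_sum]
  refine Finset.sum_nbij' (i := fun k => n - k) (j := fun j => n - j)
    (fun k hk => Finset.mem_range.2 ?_) (fun j hj => Finset.mem_Icc.2 ?_)
    (fun k hk => ?_) (fun j hj => ?_) (fun k hk => ?_)
  · have := Finset.mem_Icc.1 hk; show n - k < n; omega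
  · have := Finset.mem_range.1 hj; show 1 ≤ n - j ∧ n - j ≤ n; omega
  · have := Finset.mem_Icc.1 hk; show n - (n - k) = k; omega
  · have := Finset.mem_range.1 hj; show n - (n - j) = j; omega
  · show _ = c * (P.coeff (n - k) * x ^ (n - k)); ring

theorem volume_lemma (n : ℕ) (hn : 1 ≤ n) (R r : ℝ) (hR : 0 < R) (hr : 0 < r) :
    ∃ B : ℕ → ℝ, B 1 = 1 / (Nat.factorial (n - 1) : ℝ) ∧
      ∀ c : ℝ, 0 < c → (R + r) ^ n < c →
        volume {x : Fin n → ℝ | (∀ k, R < x k) ∧ (∏ k, (x k + r)) < c} =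
          ENNReal.ofReal
            ((∑ k ∈ Finset.Icc 1 n, B k * c * (Real.log c) ^ (n - k)) +
              (-1 : ℝ) ^ n * (R + r) ^ n) := by
  have ha : 0 < R + r := by positivity
  obtain ⟨P, hdeg, hcoeff, hP⟩ := main_ind (R + r) ha n hn
  refine ⟨fun k => P.coeff (n - k), hcoeff, ?_⟩
  intro c hc0 hc
  have hSeq : {x : Fin n → ℝ | (∀ k, R < x k) ∧ (∏ k, (x k + r)) < c}
      = (fun x : Fin n → ℝ => x + fun _ => r) ⁻¹' Sset (R + r) n c := by
    ext x
    simp only [Set.mem_preimage, Sset, Set.mem_setOf_eq, Pi.add_apply]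
    constructor
    · rintro ⟨h1, h2⟩
      exact ⟨fun k => by have := h1 k; linarith, h2⟩
    · rintro ⟨h1, h2⟩
      exact ⟨fun k => by have := h1 k; linarith, h2⟩
  rw [hSeq, measure_preimage_add_right, (hP c hc).2]
  congr 1
  rw [sum_swap_lemma P n hn (by omega) c (Real.log c)]
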